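/- Adding a constraint derived from an inconsistency reason does not eliminate answer sets: let P be a program, D a domain with D disjoint from heads of P, and (R⁺, R⁻) an inconsistency reason of P wrt. D. Let c be the constraint ← R⁺, not R⁻ (body contains each a ∈ R⁺ positively and each a ∈ R⁻ under negation). Then for every F ⊆ D, the answer sets of P ∪ facts(F) equal the answer sets of P ∪ {c} ∪ facts(F). -/

import Mathlib

structure Rule (Atom : Type) where
  head : Atom
  pbody : Set Atom
  nbody : Set Atom

def satRule {Atom : Type} (I : Set Atom) (r : Rule Atom) : Prop :=
  r.pbody ⊆ I ∧ r.nbody ∩ I = ∅ → r.head ∈ I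

def isModel {Atom : Type} (I : Set Atom) (P : Set (Rule Atom)) : Prop :=
  ∀ r ∈ P, satRule I r

def reduct {Atom : Type} (P : Set (Rule Atom)) (I : Set Atom) : Set (Rule Atom) :=
  {r' | ∃ r ∈ P, r.nbody ∩ I = ∅ ∧ r' = Rule.mk r.head r.pbody ∅}

def isAnswerSet {Atom : Type} (P : Set (Rule Atom)) (I : Set Atom) : Prop :=
  isModel I (reduct P I) ∧ ∀ J, isModel J (reduct P I) → I ⊆ J

def facts {Atom : Type} (F : Set Atom) : Set (Rule Atom) :=
  {r | ∃ a ∈ F, r = Rule.mk a ∅ ∅}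

lemma reduct_union {Atom : Type} (A B : Set (Rule Atom)) (I : Set Atom) :
    reduct (A ∪ B) I = reduct A I ∪ reduct B I := by
  ext r'
  constructor
  · rintro ⟨r, hr | hr, hn, he⟩
    · exact Or.inl ⟨r, hr, hn, he⟩
    · exact Or.inr ⟨r, hr, hn, he⟩
  · rintro (⟨r, hr, hn, he⟩ | ⟨r, hr, hn, he⟩)
    · exact ⟨r, Or.inl hr, hn, he⟩
    · exact ⟨r, Or.inr hr, hn, he⟩

lemma as_congr {Atom : Type} {S S' : Set (Rule Atom)} {I : Set Atom}
    (h : reduct S I = reduct S' I) : isAnswerSet S I ↔ isAnswerSet S' I := by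
  unfold isAnswerSet
  rw [h]

lemma as_head {Atom : Type} {S : Set (Rule Atom)} {I : Set Atom} (h : isAnswerSet S I)
    {a : Atom} (ha : a ∈ I) : ∃ r ∈ S, r.head = a ∧ r.nbody ∩ I = ∅ := by
  by_contra hc
  push_neg at hc
  have hm : isModel (I \ {a}) (reduct S I) := by
    rintro r' ⟨r, hr, hn, rfl⟩ ⟨hp, -⟩
    have hhead : r.head ∈ I := h.1 (Rule.mk r.head r.pbody ∅) ⟨r, hr, hn, rfl⟩ ⟨fun x hx => (hp hx).1, by simp⟩
    exact ⟨hhead, fun he => ((hc r hr (by simpa using he)).ne_empty hn)⟩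
  exact (h.2 _ hm ha).2 rfl

lemma as_facts {Atom : Type} {P' : Set (Rule Atom)} {F I : Set Atom}
    (h : isAnswerSet (P' ∪ facts F) I) : F ⊆ I := by
  intro a ha
  exact h.1 (Rule.mk a ∅ ∅) ⟨Rule.mk a ∅ ∅, Or.inr ⟨a, ha, rfl⟩, by simp, rfl⟩
    ⟨by simp, by simp⟩

lemma as_interD {Atom : Type} {P' : Set (Rule Atom)} {F D I : Set Atom}
    (hH : ∀ r ∈ P', r.head ∉ D) (hF : F ⊆ D)
    (h : isAnswerSet (P' ∪ facts F) I) : I ∩ D = F := by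
  apply subset_antisymm
  · rintro a ⟨haI, haD⟩
    obtain ⟨r, hr | ⟨b, hb, rfl⟩, hhead, -⟩ := as_head h haI
    · exact absurd haD (hhead ▸ hH r hr)
    · simpa [← hhead] using hb
  · exact fun a ha => ⟨as_facts h ha, hF ha⟩

lemma model_inter {Atom : Type} {S : Set (Rule Atom)} {K I J : Set Atom}
    (hI : isModel I (reduct S K)) (hJ : isModel J (reduct S K)) :
    isModel (I ∩ J) (reduct S K) := by
  rintro r' hr' ⟨hp, -⟩
  obtain ⟨r, hr, hn, rfl⟩ := hr'
  constructor
  · exact hI _ ⟨r, hr, hn, rfl⟩ ⟨fun x hx => (hp hx).1, by simp⟩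
  · exact hJ _ ⟨r, hr, hn, rfl⟩ ⟨fun x hx => (hp hx).2, by simp⟩

theorem stmt6 {Atom : Type} (P : Set (Rule Atom)) (D Rp Rm : Set Atom) (f : Atom)
    (hHD : ∀ r ∈ P, r.head ∉ D)
    (hRp : Rp ⊆ D) (hRm : Rm ⊆ D) (hdisj : Rp ∩ Rm = ∅)
    (hIR : ∀ F, F ⊆ D → Rp ⊆ F → Rm ∩ F = ∅ → ¬ ∃ I, isAnswerSet (P ∪ facts F) I)
    (hfP : ∀ r ∈ P, r.head ≠ f ∧ f ∉ r.pbody ∧ f ∉ r.nbody) (hfD : f ∉ D) :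
    ∀ F, F ⊆ D →
      {I | isAnswerSet (P ∪ facts F) I} =
        {I | isAnswerSet (P ∪ {Rule.mk f Rp (Rm ∪ {f})} ∪ facts F) I} := by
  intro F hF
  ext I
  simp only [Set.mem_setOf_eq]
  set c : Rule Atom := Rule.mk f Rp (Rm ∪ {f}) with hc
  set cr : Rule Atom := Rule.mk f Rp ∅ with hcr
  have hred : ∀ (K : Set Atom),
      reduct (P ∪ {c} ∪ facts F) K = reduct (P ∪ facts F) K ∪ reduct {c} K := by
    intro K
    rw [reduct_union, reduct_union, reduct_union]
    ac_rfl
  constructor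
  · intro h
    by_cases hcase : (Rm ∪ {f}) ∩ I = ∅
    · -- constraint reduct present
      have hfI : f ∉ I := by
        intro hfi
        have : f ∈ (Rm ∪ {f}) ∩ I := ⟨Or.inr rfl, hfi⟩
        rw [hcase] at this
        exact this
      have hRmI : Rm ∩ I = ∅ := by
        apply Set.eq_empty_of_subset_empty
        rw [← hcase]
        exact Set.inter_subset_inter_left _ Set.subset_union_left
      have hID : I ∩ D = F := as_interD hHD hF h
      have hRpI : ¬ Rp ⊆ I := by
        intro hsub
        refine hIR F hF ?_ ?_ ⟨I, h⟩
        · rw [← hID]; exact fun a ha => ⟨hsub ha, hRp ha⟩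
        · apply Set.eq_empty_of_subset_empty
          rw [← hRmI]
          refine Set.inter_subset_inter_right _ ?_
          rw [← hID]; exact Set.inter_subset_left
      have hrc : reduct {c} I = {cr} := by
        ext r'
        constructor
        · rintro ⟨r, hr, hn, rfl⟩
          simp only [Set.mem_singleton_iff] at hr
          subst hr
          rfl
        · rintro rfl
          exact ⟨c, rfl, hcase, rfl⟩
      have hredI : reduct (P ∪ {c} ∪ facts F) I = reduct (P ∪ facts F) I ∪ {cr} := by
        rw [hred, hrc]
      constructor
      · rw [hredI]
        rintro r' (hr' | hr')
        · exact h.1 r' hr'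
        · simp only [Set.mem_singleton_iff] at hr'
          subst hr'
          rintro ⟨hp, -⟩
          exact absurd hp hRpI
      · intro J hJ
        rw [hredI] at hJ
        exact h.2 J fun r' hr' => hJ r' (Or.inl hr')
    · -- constraint reduct absent
      have hrc : reduct {c} I = ∅ := by
        ext r'
        simp only [Set.mem_empty_iff_false, iff_false]
        rintro ⟨r, hr, hn, rfl⟩
        simp only [Set.mem_singleton_iff] at hr
        subst hr
        exact hcase hn
      have : reduct (P ∪ {c} ∪ facts F) I = reduct (P ∪ facts F) I := by
        rw [hred, hrc, Set.union_empty]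
      exact (as_congr this).mpr h
  · intro h
    by_cases hcase : (Rm ∪ {f}) ∩ I = ∅
    · have hfI : f ∉ I := by
        intro hfi
        have : f ∈ (Rm ∪ {f}) ∩ I := ⟨Or.inr rfl, hfi⟩
        rw [hcase] at this
        exact this
      have hrc : reduct {c} I = {cr} := by
        ext r'
        constructor
        · rintro ⟨r, hr, hn, rfl⟩
          simp only [Set.mem_singleton_iff] at hr
          subst hr
          rfl
        · rintro rfl
          exact ⟨c, rfl, hcase, rfl⟩
      have hredI : reduct (P ∪ {c} ∪ facts F) I = reduct (P ∪ facts F) I ∪ {cr} := by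
        rw [hred, hrc]
      have hmI : isModel I (reduct (P ∪ facts F) I) := by
        intro r' hr'
        exact h.1 r' (by rw [hredI]; exact Or.inl hr')
      have hRpI : ¬ Rp ⊆ I := by
        intro hsub
        apply hfI
        exact h.1 cr (by rw [hredI]; exact Or.inr rfl) ⟨hsub, by simp [hcr]⟩
      constructor
      · exact hmI
      · intro J hJ
        have hJI : isModel (J ∩ I) (reduct (P ∪ facts F) I) := model_inter hJ hmI
        have : isModel (J ∩ I) (reduct (P ∪ {c} ∪ facts F) I) := by
          rw [hredI]
          rintro r' (hr' | hr')
          · exact hJI r' hr'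
          · simp only [Set.mem_singleton_iff] at hr'
            subst hr'
            rintro ⟨hp, -⟩
            exact absurd (fun x hx => (hp hx).2) hRpI
        exact fun a ha => (h.2 _ this ha).1
    · have hrc : reduct {c} I = ∅ := by
        ext r'
        simp only [Set.mem_empty_iff_false, iff_false]
        rintro ⟨r, hr, hn, rfl⟩
        simp only [Set.mem_singleton_iff] at hr
        subst hr
        exact hcase hn
      have : reduct (P ∪ {c} ∪ facts F) I = reduct (P ∪ facts F) I := by
        rw [hred, hrc, Set.union_empty]
      exact (as_congr this).mp h
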